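/- Let X and Y be Banach spaces over 𝕂 (= ℝ or ℂ) and let T : X → Y be a bounded linear operator. If T quasi attains its norm toward y₀ ∈ Y (i.e., y₀ lies in the norm closure of T(B_X) and ‖y₀‖ = ‖T‖), then the adjoint operator T* : Y* → X* attains its norm; moreover, T* attains its norm at every y* ∈ Y* with ‖y*‖ = 1 and |y*(y₀)| = ‖y₀‖, i.e., ‖T* y*‖ = ‖T*‖ = ‖T‖ for every such y*. -/

import Mathlib

/-- If `T` quasi attains its norm toward `y₀`, then the adjoint `T*` (here
`y* ↦ y* ∘ T`) attains its norm; moreover `T*` attains its norm (namely `‖T*‖ = ‖T‖`) at every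
norm-one functional `y*` with `|y*(y₀)| = ‖y₀‖`. -/
theorem quasi_attains_implies_adjoint_attains {𝕜 X Y : Type*} [RCLike 𝕜]
    [NormedAddCommGroup X] [NormedSpace 𝕜 X] [CompleteSpace X]
    [NormedAddCommGroup Y] [NormedSpace 𝕜 Y] [CompleteSpace Y] [Nontrivial Y]
    (T : X →L[𝕜] Y) (y₀ : Y)
    (hy₀ : y₀ ∈ closure (⇑T '' Metric.closedBall 0 1)) (hy₀norm : ‖y₀‖ = ‖T‖) :
    (∃ g : Y →L[𝕜] 𝕜, ‖g‖ = 1 ∧ ‖g.comp T‖ = ‖T‖) ∧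
    (∀ g : Y →L[𝕜] 𝕜, ‖g‖ = 1 → ‖g y₀‖ = ‖y₀‖ → ‖g.comp T‖ = ‖T‖) := by
  have key : ∀ g : Y →L[𝕜] 𝕜, ‖g‖ = 1 → ‖g y₀‖ = ‖y₀‖ → ‖g.comp T‖ = ‖T‖ := by
    intro g hg hgy
    refine le_antisymm ?_ ?_
    · calc ‖g.comp T‖ ≤ ‖g‖ * ‖T‖ := g.opNorm_comp_le T
        _ = ‖T‖ := by rw [hg, one_mul]
    · rw [← hy₀norm, ← hgy]
      have hclosed : IsClosed {y : Y | ‖g y‖ ≤ ‖g.comp T‖} :=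
        isClosed_le (continuous_norm.comp g.continuous) continuous_const
      have hsub : ⇑T '' Metric.closedBall 0 1 ⊆ {y : Y | ‖g y‖ ≤ ‖g.comp T‖} := by
        rintro y ⟨x, hx, rfl⟩
        have hx1 : ‖x‖ ≤ 1 := by simpa [dist_zero_right] using hx
        calc ‖g (T x)‖ = ‖(g.comp T) x‖ := rfl
          _ ≤ ‖g.comp T‖ * ‖x‖ := (g.comp T).le_opNorm x
          _ ≤ ‖g.comp T‖ * 1 := by
              exact mul_le_mul_of_nonneg_left hx1 (norm_nonneg _)
          _ = ‖g.comp T‖ := mul_one _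
      exact hclosed.closure_subset_iff.mpr hsub hy₀
  refine ⟨?_, key⟩
  by_cases h0 : y₀ = 0
  · have hT0 : T = 0 := by
      have : ‖T‖ = 0 := by rw [← hy₀norm, h0, norm_zero]
      exact norm_eq_zero.mp this
    obtain ⟨y, hy⟩ := exists_ne (0 : Y)
    obtain ⟨g, hg1, _⟩ := exists_dual_vector 𝕜 y (norm_ne_zero_iff.mpr hy)
    exact ⟨g, hg1, by simp [hT0]⟩
  · obtain ⟨g, hg1, hgy⟩ := exists_dual_vector 𝕜 y₀ (norm_ne_zero_iff.mpr h0)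
    exact ⟨g, hg1, key g hg1 (by rw [hgy]; simp)⟩
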